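/- For every positive integer d, the continued fraction expansion of √(2d(2d−1)) is [2d−1; overline{2, 4d−2}], i.e. it is periodic with period (2, 4d−2) after the initial term 2d−1. -/

import Mathlib

open GenContFract

/-- For every positive integer `d`, the continued fraction expansion of `√(2d(2d−1))`
is `[2d−1; 2, 4d−2, 2, 4d−2, …]`, periodic with period `(2, 4d−2)`. -/
theorem stmt6 (d : ℕ) (hd : 0 < d) :
    (GenContFract.of (Real.sqrt (2 * d * (2 * d - 1)))).h = 2 * (d : ℝ) - 1 ∧
    ∀ n : ℕ,
      (GenContFract.of (Real.sqrt (2 * d * (2 * d - 1)))).partDens.get? (2 * n)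
        = some (2 : ℝ) ∧
      (GenContFract.of (Real.sqrt (2 * d * (2 * d - 1)))).partDens.get? (2 * n + 1)
        = some (4 * (d : ℝ) - 2) := by
  have hd1 : (1 : ℝ) ≤ (d : ℝ) := by exact_mod_cast hd
  set D : ℝ := (d : ℝ) with hD
  set N : ℝ := 2 * (d : ℝ) * (2 * (d : ℝ) - 1) with hN
  have hN0 : 0 ≤ N := by nlinarith
  set v : ℝ := Real.sqrt N with hv
  have hv2 : v ^ 2 = N := Real.sq_sqrt hN0
  have hvpos : 0 ≤ v := Real.sqrt_nonneg _
  -- bounds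
  have hlow : 2 * D - 1 < v := by
    have h1 : (2 * D - 1) ^ 2 < N := by nlinarith
    nlinarith [hv2, hvpos]
  have hhigh : v < 2 * D := by
    have h1 : N < (2 * D) ^ 2 := by nlinarith
    nlinarith [hv2, hvpos]
  have h2D1 : (1 : ℝ) ≤ 2 * D - 1 := by linarith
  -- floor of v
  have hfloor : ⌊v⌋ = 2 * (d : ℤ) - 1 := by
    rw [Int.floor_eq_iff]
    constructor
    · push_cast; linarith
    · push_cast; linarith
  have hfract : Int.fract v = v - (2 * D - 1) := by
    rw [Int.fract, hfloor]; push_cast; ring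
  set f : ℝ := v - (2 * D - 1) with hf
  have hf0 : 0 < f := by simp [hf]; linarith
  have hf1 : f < 1 := by simp [hf]; linarith
  -- f⁻¹ = (v + 2D - 1)/(2D - 1)
  have hkey : f * (v + (2 * D - 1)) = 2 * D - 1 := by
    have : f * (v + (2 * D - 1)) = v ^ 2 - (2 * D - 1) ^ 2 := by ring
    rw [this, hv2]; ring
  have hfinv : f⁻¹ = (v + (2 * D - 1)) / (2 * D - 1) := by
    field_simp
    nlinarith [hkey]
  have hfinv_lb : 2 ≤ f⁻¹ := by
    rw [hfinv, le_div_iff₀ (by linarith)]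
    linarith
  have hfinv_ub : f⁻¹ < 3 := by
    rw [hfinv, div_lt_iff₀ (by linarith)]
    nlinarith
  have hfloor_finv : ⌊f⁻¹⌋ = 2 := by
    rw [Int.floor_eq_iff]
    constructor <;> push_cast <;> linarith
  set g : ℝ := f⁻¹ - 2 with hg
  have hfract_finv : Int.fract f⁻¹ = g := by
    rw [Int.fract, hfloor_finv]; push_cast; rfl
  have hg0 : 0 < g := by
    have : f⁻¹ ≠ 2 := by
      intro h
      have hfval : f = 1 / 2 := by
        field_simp at h ⊢; linarith [h]
      have : v = 2 * D - 1/2 := by rw [hf] at hfval; linarith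
      have : N = (2 * D - 1/2) ^ 2 := by rw [← hv2, this]
      nlinarith
    cases lt_or_eq_of_le hfinv_lb with
    | inl h => simp [hg]; linarith
    | inr h => exact absurd h.symm this
  -- g = f / (2D - 1)
  have hgval : g = f / (2 * D - 1) := by
    rw [hg, hfinv]
    field_simp
    ring
  have hgmul : g * (v + (2 * D - 1)) = 1 := by
    rw [hgval, div_mul_eq_mul_div, hkey, div_self (by linarith)]
  have hginv : g⁻¹ = v + (2 * D - 1) := (eq_inv_of_mul_eq_one_left (by rw [mul_comm]; exact hgmul)).symm
  have hg1 : g < 1 := by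
    nlinarith [hgmul]
  have hfloor_ginv : ⌊g⁻¹⌋ = 4 * (d : ℤ) - 2 := by
    have : g⁻¹ = v + ((2 * (d : ℤ) - 1 : ℤ) : ℝ) := by rw [hginv]; push_cast; ring
    rw [this, Int.floor_add_intCast, hfloor]; ring
  have hfract_ginv : Int.fract g⁻¹ = f := by
    rw [Int.fract, hfloor_ginv, hf]; push_cast; rw [hginv]; ring
  -- IntFractPair computations
  have hof_v : GenContFract.IntFractPair.of v = ⟨2 * (d : ℤ) - 1, f⟩ := by
    rw [GenContFract.IntFractPair.of]
    simp [hfloor, hfract]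
  have hof_f : GenContFract.IntFractPair.of f⁻¹ = ⟨2, g⟩ := by
    rw [GenContFract.IntFractPair.of]
    simp [hfloor_finv, hfract_finv]
  have hof_g : GenContFract.IntFractPair.of g⁻¹ = ⟨4 * (d : ℤ) - 2, f⟩ := by
    rw [GenContFract.IntFractPair.of]
    simp [hfloor_ginv, hfract_ginv]
  -- the stream
  have hstream : ∀ n : ℕ,
      GenContFract.IntFractPair.stream v (2 * n + 1) = some ⟨2, g⟩ ∧
      GenContFract.IntFractPair.stream v (2 * n + 2) = some ⟨4 * (d : ℤ) - 2, f⟩ := by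
    intro n
    induction n with
    | zero =>
      have h0 : GenContFract.IntFractPair.stream v 0 = some ⟨2 * (d : ℤ) - 1, f⟩ := by
        rw [GenContFract.IntFractPair.stream_zero, hof_v]
      have h1 : GenContFract.IntFractPair.stream v 1 = some ⟨2, g⟩ := by
        have := GenContFract.IntFractPair.stream_succ_of_some h0 (by exact ne_of_gt hf0)
        rwa [hof_f] at this
      refine ⟨h1, ?_⟩
      have := GenContFract.IntFractPair.stream_succ_of_some h1 (by exact ne_of_gt hg0)
      rwa [hof_g] at this
    | succ k ih =>
      have h1 : GenContFract.IntFractPair.stream v (2 * (k + 1) + 1) = some ⟨2, g⟩ := by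
        have := GenContFract.IntFractPair.stream_succ_of_some ih.2 (by exact ne_of_gt hf0)
        rw [hof_f] at this
        have h2 : 2 * (k + 1) + 1 = (2 * k + 2) + 1 := by ring
        rw [h2]
        exact this
      refine ⟨h1, ?_⟩
      have := GenContFract.IntFractPair.stream_succ_of_some h1 (by exact ne_of_gt hg0)
      rwa [hof_g] at this
  constructor
  · rw [GenContFract.of_h_eq_floor, hfloor]
    push_cast
    ring
  · intro n
    have hs1 := GenContFract.get?_of_eq_some_of_succ_get?_intFractPair_stream (hstream n).1
    have hs2 := GenContFract.get?_of_eq_some_of_succ_get?_intFractPair_stream (hstream n).2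
    constructor
    · rw [GenContFract.partDens, Stream'.Seq.map_get?, hs1]
      norm_num
    · rw [GenContFract.partDens, Stream'.Seq.map_get?, hs2]
      simp only [Option.map_some]
      norm_num
      exact hD.symm
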